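/- Let V : ℕ → ℤ[T,T⁻¹] satisfy the Jones recurrence V(m+2) = (T³ − T)·V(m+1) + T⁴·V(m) for all m. Then: (a) for every e, ord V(e+2) ≥ 1 + min(ord V(e), ord V(e+1)) in WithTop ℤ; (b) for every e and every m ≥ 2, ord V(e+m) ≥ min(ord V(e), ord V(e+1)) + (m − 1); in particular, there exists e₀ such that for every e ≥ e₀ the support of V(e) is contained in the nonnegative integers (i.e. V(e) is a polynomial in T). -/

import Mathlib

/-- The order of a Laurent polynomial `f`, viewed as a finitely supported function
`ℤ → ℤ`: the minimum of its support in `WithTop ℤ` (so `jord 0 = ⊤`). -/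
noncomputable def jord (f : LaurentPolynomial ℤ) : WithTop ℤ :=
  (f.coeff : ℤ →₀ ℤ).support.min

open LaurentPolynomial Pointwise

lemma jord_le {f : LaurentPolynomial ℤ} {n : ℤ} (h : n ∈ (f.coeff : ℤ →₀ ℤ).support) :
    jord f ≤ (n : WithTop ℤ) := Finset.min_le h

lemma le_jord {f : LaurentPolynomial ℤ} {c : WithTop ℤ}
    (h : ∀ n ∈ (f.coeff : ℤ →₀ ℤ).support, c ≤ (n : WithTop ℤ)) : c ≤ jord f :=
  Finset.le_min h

lemma jord_add_ge (f g : LaurentPolynomial ℤ) :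
    min (jord f) (jord g) ≤ jord (f + g) := by
  apply le_jord
  intro n hn
  have h : n ∈ (f.coeff : ℤ →₀ ℤ).support ∪ (g.coeff : ℤ →₀ ℤ).support := Finsupp.support_add hn
  rcases Finset.mem_union.mp h with h | h
  · exact le_trans (min_le_left _ _) (jord_le h)
  · exact le_trans (min_le_right _ _) (jord_le h)

lemma jord_mul_ge (f g : LaurentPolynomial ℤ) :
    jord f + jord g ≤ jord (f * g) := by
  apply le_jord
  intro n hn
  have h : n ∈ (f.coeff : ℤ →₀ ℤ).support + (g.coeff : ℤ →₀ ℤ).support :=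
    AddMonoidAlgebra.support_coeff_mul_subset f g hn
  rcases Finset.mem_add.mp h with ⟨a, ha, b, hb, hab⟩
  calc jord f + jord g ≤ (a : WithTop ℤ) + (b : WithTop ℤ) :=
        add_le_add (jord_le ha) (jord_le hb)
    _ = ((a + b : ℤ) : WithTop ℤ) := by norm_cast
    _ = (n : WithTop ℤ) := by rw [hab]

lemma jord_T (n : ℤ) : jord (T n : LaurentPolynomial ℤ) = (n : WithTop ℤ) := by
  have : ((T n : LaurentPolynomial ℤ).coeff : ℤ →₀ ℤ) = Finsupp.single n 1 := rfl
  rw [jord, this, Finsupp.support_single_ne_zero n one_ne_zero, Finset.min_singleton]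

lemma jord_T31 : ((1 : ℤ) : WithTop ℤ) ≤ jord ((T 3 - T 1 : LaurentPolynomial ℤ)) := by
  apply le_jord
  intro n hn
  have h : n ∈ ((T 3 : LaurentPolynomial ℤ).coeff : ℤ →₀ ℤ).support ∪
      ((T 1 : LaurentPolynomial ℤ).coeff : ℤ →₀ ℤ).support := Finsupp.support_sub hn
  have e3 : ((T 3 : LaurentPolynomial ℤ).coeff : ℤ →₀ ℤ) = Finsupp.single 3 1 := rfl
  have e1 : ((T 1 : LaurentPolynomial ℤ).coeff : ℤ →₀ ℤ) = Finsupp.single 1 1 := rfl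
  rw [e3, e1, Finsupp.support_single_ne_zero _ one_ne_zero,
    Finsupp.support_single_ne_zero _ one_ne_zero] at h
  rcases Finset.mem_union.mp h with h | h <;>
    rw [Finset.mem_singleton] at h <;> subst h <;>
    exact WithTop.coe_le_coe.mpr (by norm_num)

/-- helper for adding integer constants on the right in `WithTop ℤ`. -/
lemma add_coe_le_add_coe {a b : WithTop ℤ} {c d : ℤ} (h : a ≤ b) (h2 : c ≤ d) :
    a + ((c : ℤ) : WithTop ℤ) ≤ b + ((d : ℤ) : WithTop ℤ) :=
  add_le_add h (WithTop.coe_le_coe.mpr h2)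

/-- The sharp one-step estimate coming directly from the recurrence. -/
lemma jones_step' (V : ℕ → LaurentPolynomial ℤ)
    (hV : ∀ m : ℕ, V (m + 2) = (T 3 - T 1) * V (m + 1) + T 4 * V m) (e : ℕ) :
    min (jord (V (e + 1)) + ((1 : ℤ) : WithTop ℤ)) (jord (V e) + ((4 : ℤ) : WithTop ℤ)) ≤
      jord (V (e + 2)) := by
  rw [hV e]
  refine le_trans ?_ (jord_add_ge _ _)
  apply le_min
  · refine le_trans ?_ (jord_mul_ge _ _)
    refine le_trans ?_ (add_le_add_left jord_T31 _)
    rw [add_comm]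
    exact min_le_left _ _
  · refine le_trans ?_ (jord_mul_ge _ _)
    rw [jord_T 4, add_comm (((4 : ℤ) : WithTop ℤ)) (jord (V e))]
    exact min_le_right _ _

open LaurentPolynomial in
/-- **Proposition 3.5**. If `V` satisfies the Jones recurrence, then
(a) `ord V(e+2) ≥ 1 + min(ord V(e), ord V(e+1))` for every `e`;
(b) `ord V(e+m) ≥ min(ord V(e), ord V(e+1)) + (m−1)` for every `e` and `m ≥ 2`;
in particular, for all large `e`, the support of `V e` consists of nonnegative
integers, i.e. `V e` is a polynomial in `T`. -/
theorem jones_order_increasing (V : ℕ → LaurentPolynomial ℤ)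
    (hV : ∀ m : ℕ, V (m + 2) = (T 3 - T 1) * V (m + 1) + T 4 * V m) :
    (∀ e : ℕ, 1 + min (jord (V e)) (jord (V (e + 1))) ≤ jord (V (e + 2))) ∧
    (∀ e m : ℕ, 2 ≤ m →
      min (jord (V e)) (jord (V (e + 1))) + (((m : ℤ) - 1 : ℤ) : WithTop ℤ) ≤
        jord (V (e + m))) ∧
    (∃ e₀ : ℕ, ∀ e : ℕ, e₀ ≤ e → ∀ n ∈ ((V e).coeff : ℤ →₀ ℤ).support, 0 ≤ n) := by
  have hone : (1 : WithTop ℤ) = ((1 : ℤ) : WithTop ℤ) := rfl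
  -- part (a)
  have ha : ∀ e : ℕ, 1 + min (jord (V e)) (jord (V (e + 1))) ≤ jord (V (e + 2)) := by
    intro e
    refine le_trans ?_ (jones_step' V hV e)
    apply le_min
    · rw [hone, add_comm]
      exact add_coe_le_add_coe (min_le_right _ _) le_rfl
    · rw [hone, add_comm]
      exact add_coe_le_add_coe (min_le_left _ _) (by norm_num)
  -- part (b), in a convenient shifted form
  have hb : ∀ e k : ℕ,
      (min (jord (V e)) (jord (V (e + 1))) + ((k : ℤ) : WithTop ℤ) ≤ jord (V (e + k + 1))) ∧
      (min (jord (V e)) (jord (V (e + 1))) + (((k : ℤ) + 1 : ℤ) : WithTop ℤ) ≤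
        jord (V (e + k + 2))) := by
    intro e k
    set μ := min (jord (V e)) (jord (V (e + 1))) with hμ
    induction k with
    | zero =>
      constructor
      · simp only [Nat.cast_zero, WithTop.coe_zero, add_zero, Nat.add_zero]
        exact min_le_right _ _
      · refine le_trans ?_ (jones_step' V hV e)
        apply le_min
        · exact add_coe_le_add_coe (min_le_right _ _) (by norm_num)
        · exact add_coe_le_add_coe (min_le_left _ _) (by norm_num)
    | succ k ih =>
      have heq1 : e + (k + 1) + 1 = e + k + 2 := by omega
      refine ⟨by rw [heq1]; exact_mod_cast ih.2, ?_⟩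
      have step := jones_step' V hV (e + k + 1)
      have heq2 : e + k + 1 + 2 = e + (k + 1) + 2 := by omega
      have heq3 : e + k + 1 + 1 = e + k + 2 := by omega
      rw [heq2, heq3] at step
      refine le_trans ?_ step
      apply le_min
      · refine le_trans ?_ (add_le_add_left ih.2 _)
        rw [add_assoc]
        apply add_le_add_right
        rw [← WithTop.coe_add, WithTop.coe_le_coe]
        push_cast; omega
      · refine le_trans ?_ (add_le_add_left ih.1 _)
        rw [add_assoc]
        apply add_le_add_right
        rw [← WithTop.coe_add, WithTop.coe_le_coe]
        push_cast; omega
  have hb' : ∀ e m : ℕ, 2 ≤ m →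
      min (jord (V e)) (jord (V (e + 1))) + (((m : ℤ) - 1 : ℤ) : WithTop ℤ) ≤
        jord (V (e + m)) := by
    intro e m hm
    obtain ⟨k, rfl⟩ : ∃ k, m = k + 1 := ⟨m - 1, by omega⟩
    have := (hb e k).1
    have hc : (((k + 1 : ℕ) : ℤ) - 1 : ℤ) = (k : ℤ) := by push_cast; ring
    rw [hc]
    exact this
  refine ⟨ha, hb', ?_⟩
  -- part (c)
  set μ := min (jord (V 0)) (jord (V 1)) with hμ
  rcases eq_or_ne μ ⊤ with htop | hne
  · refine ⟨1, fun e he n hn => ?_⟩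
    obtain ⟨k, rfl⟩ : ∃ k, e = 0 + k + 1 := ⟨e - 1, by omega⟩
    have h := (hb 0 k).1
    rw [show (0:ℕ) + 1 = 1 from rfl, ← hμ, htop] at h
    simp only [top_add, top_le_iff] at h
    have hs : (((V (0 + k + 1)).coeff : ℤ →₀ ℤ)).support = ∅ := Finset.min_eq_top.mp h
    rw [hs] at hn
    exact absurd hn (Finset.notMem_empty n)
  · obtain ⟨c, hc⟩ := WithTop.ne_top_iff_exists.mp hne
    refine ⟨(-c).toNat + 1, fun e he n hn => ?_⟩
    obtain ⟨k, rfl⟩ : ∃ k, e = 0 + k + 1 := ⟨e - 1, by omega⟩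
    have h := (hb 0 k).1
    rw [show (0:ℕ) + 1 = 1 from rfl, ← hμ, ← hc] at h
    have hle : jord (V (0 + k + 1)) ≤ (n : WithTop ℤ) := jord_le hn
    have h2 : ((c + k : ℤ) : WithTop ℤ) ≤ (n : WithTop ℤ) := by
      refine le_trans ?_ (le_trans h hle)
      rw [← WithTop.coe_add]
    replace h2 := WithTop.coe_le_coe.mp h2
    have : (-c).toNat + 1 ≤ 0 + k + 1 := he
    omega
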